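/- Let X and Y be Banach spaces over 𝕜 (𝕜 = ℝ or ℂ) with X nontrivial, and let T : X → Y be a nonzero bounded linear operator. If x ∈ m_T, then T preserves Birkhoff–James orthogonality at x: for every y ∈ X, if x ⊥_B y then Tx ⊥_B Ty. -/

import Mathlib

/-- Birkhoff–James orthogonality over the field `𝕜`. -/
def BirkhoffOrth (𝕜 : Type*) {X : Type*} [RCLike 𝕜] [NormedAddCommGroup X]
    [NormedSpace 𝕜 X] (x y : X) : Prop :=
  ∀ lam : 𝕜, ‖x‖ ≤ ‖x + lam • y‖

/-- The minimum norm of a bounded linear operator. -/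
noncomputable def minNorm {𝕜 X Y : Type*} [RCLike 𝕜] [NormedAddCommGroup X]
    [NormedSpace 𝕜 X] [NormedAddCommGroup Y] [NormedSpace 𝕜 Y] (T : X →L[𝕜] Y) : ℝ :=
  sInf {r : ℝ | ∃ x : X, ‖x‖ = 1 ∧ r = ‖T x‖}

theorem stmt_3 {𝕜 X Y : Type*} [RCLike 𝕜]
    [NormedAddCommGroup X] [NormedSpace 𝕜 X] [CompleteSpace X] [Nontrivial X]
    [NormedAddCommGroup Y] [NormedSpace 𝕜 Y] [CompleteSpace Y]
    (T : X →L[𝕜] Y) (hT : T ≠ 0)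
    (x : X) (hx : ‖x‖ = 1) (hxm : ‖T x‖ = minNorm T) :
    ∀ y : X, BirkhoffOrth 𝕜 x y → BirkhoffOrth 𝕜 (T x) (T y) := by
  intro y hxy
  have hm0 : 0 ≤ minNorm T := hxm ▸ norm_nonneg (T x)
  have key : ∀ z : X, minNorm T * ‖z‖ ≤ ‖T z‖ := by
    intro z
    rcases eq_or_ne z 0 with rfl | hz
    · simp
    · have hz' : ‖z‖ ≠ 0 := norm_ne_zero_iff.mpr hz
      have hmem : ‖T (((‖z‖⁻¹ : ℝ) : 𝕜) • z)‖ ∈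
          {r : ℝ | ∃ x : X, ‖x‖ = 1 ∧ r = ‖T x‖} := by
        refine ⟨_, ?_, rfl⟩
        rw [norm_smul]
        simp [abs_of_nonneg (norm_nonneg z), hz']
      have hb : BddBelow {r : ℝ | ∃ x : X, ‖x‖ = 1 ∧ r = ‖T x‖} :=
        ⟨0, fun r ⟨w, _, hr⟩ => hr ▸ norm_nonneg _⟩
      have h1 := csInf_le hb hmem
      rw [map_smul, norm_smul] at h1
      have h2 : minNorm T ≤ ‖z‖⁻¹ * ‖T z‖ := by
        simpa [minNorm, abs_of_nonneg (norm_nonneg z)] using h1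
      calc minNorm T * ‖z‖ ≤ (‖z‖⁻¹ * ‖T z‖) * ‖z‖ :=
            mul_le_mul_of_nonneg_right h2 (norm_nonneg z)
        _ = ‖T z‖ := by field_simp
  intro lam
  have h1 : (1:ℝ) ≤ ‖x + lam • y‖ := hx ▸ hxy lam
  calc ‖T x‖ = minNorm T * 1 := by rw [hxm, mul_one]
    _ ≤ minNorm T * ‖x + lam • y‖ := mul_le_mul_of_nonneg_left h1 hm0
    _ ≤ ‖T (x + lam • y)‖ := key _
    _ = ‖T x + lam • T y‖ := by rw [map_add, map_smul]
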